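/- Let f̄: Ω → ℝ be an α-Hölder normalized potential (L_{f̄} 1 ≡ 1) and γ_n(A|y) = L_{f̄}^n(1_A)(σ^n(y)). Let μ be a shift-invariant Borel probability measure such that μ restricted to F_{Λ_n} is absolutely continuous with respect to p^ℕ restricted to F_{Λ_n}. Then for every y ∈ Ω and every n ≥ 1, H_{Λ_n}(μ | γ_n(·|y)) = −H_{Λ_n}(μ) − ∫_Ω S_n(f̄)(x_{Λ_n} y_{Λ_n^c}) dμ(x). -/

import Mathlib

open MeasureTheory Filter
open scoped Classical ENNReal

noncomputable section

namespace Paper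

variable {A : Type*} [MetricSpace A] [CompactSpace A] [MeasurableSpace A] [BorelSpace A]

/-- The left shift `σ` on `Ω = Aᴺ`. -/
def shift (x : ℕ → A) : ℕ → A := fun n => x (n + 1)

/-- Prepend a symbol: `cons a x = (a, x₀, x₁, …)`. -/
def cons (a : A) (x : ℕ → A) : ℕ → A := fun n =>
  match n with
  | 0 => a
  | n + 1 => x n

/-- The metric `d_Ω` on `Ω`. -/
def dOmega (x y : ℕ → A) : ℝ :=
  ∑' n : ℕ, (1 / 2 : ℝ) ^ (n + 1) * (dist (x n) (y n) / (1 + dist (x n) (y n)))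

/-- `f` is `α`-Hölder with respect to `d_Ω`. -/
def IsHolder (α : ℝ) (f : (ℕ → A) → ℝ) : Prop :=
  ∃ C : ℝ, 0 ≤ C ∧ ∀ x y, |f x - f y| ≤ C * dOmega x y ^ α

/-- The Ruelle transfer operator with a priori measure `p`. -/
def ruelle (p : Measure A) (f φ : (ℕ → A) → ℝ) : (ℕ → A) → ℝ :=
  fun x => ∫ a, Real.exp (f (cons a x)) * φ (cons a x) ∂p

/-- The normalized potential `f̄ = f + log h - log (h ∘ σ) - log λ`. -/
def fbar (f h : (ℕ → A) → ℝ) (lam : ℝ) : (ℕ → A) → ℝ :=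
  fun x => f x + Real.log (h x) - Real.log (h (shift x)) - Real.log lam

/-- Projection on the first `n` coordinates. -/
def proj (n : ℕ) (x : ℕ → A) : Fin n → A := fun i => x i

/-- Relative entropy `H(μ|ν)` of two measures, with value `+∞` unless
`μ ≪ ν` and the entropy integral is finite. -/
def relEnt {X : Type*} [MeasurableSpace X] (μ ν : Measure X) : EReal :=
  if μ ≪ ν ∧ Integrable (fun x => Real.log (μ.rnDeriv ν x).toReal) μ then
    ((∫ x, Real.log (μ.rnDeriv ν x).toReal ∂μ : ℝ) : EReal)
  else ⊤

/-- Relative entropy `H_{Λ_n}(μ|ν)` on the σ-algebra of the first `n` coordinates. -/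
def relEntN (n : ℕ) (μ ν : Measure (ℕ → A)) : EReal :=
  relEnt (μ.map (proj n)) (ν.map (proj n))

/-- The entropy `H_{Λ_n}(μ) = -H_{Λ_n}(μ | pᴺ)` relative to the a priori measure `p`. -/
def finEnt (p : Measure A) (μ : Measure (ℕ → A)) (n : ℕ) : EReal :=
  - relEnt (μ.map (proj n)) (Measure.pi fun _ : Fin n => p)

/-- The specific entropy `h^s(μ) = lim_n H_{Λ_n}(μ)/n` (defined as a `limsup`,
which coincides with the limit whenever the latter exists). -/
def specEnt (p : Measure A) (μ : Measure (ℕ → A)) : EReal :=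
  Filter.atTop.limsup fun n : ℕ => ((n : ℝ)⁻¹ : EReal) * finEnt p μ n

/-- Birkhoff sum `S_n(f)`. -/
def birkhoff (n : ℕ) (f : (ℕ → A) → ℝ) (x : ℕ → A) : ℝ :=
  ∑ i ∈ Finset.range n, f (shift^[i] x)

/-- The configuration `x_{Λ_n} y_{Λ_n^c}`. -/
def concatAt (n : ℕ) (x y : ℕ → A) : ℕ → A := fun i => if i < n then x i else y i

/-- Concatenation of a finite word with a configuration. -/
def wordCons (n : ℕ) (a : Fin n → A) (x : ℕ → A) : ℕ → A :=
  fun i => if h : i < n then a ⟨i, h⟩ else x (i - n)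

/-- The probability kernel `γ_n(·|y) = L_f^n(1_·)(σ^n y)`, realized concretely as the
image under `a ↦ a ⬝ σ^n(y)` of the measure on `A^n` with density
`a ↦ exp(S_n(f)(a ⬝ σ^n(y)))` with respect to `p^n`. -/
def gammaMeasure (p : Measure A) (f : (ℕ → A) → ℝ) (n : ℕ) (y : ℕ → A) :
    Measure (ℕ → A) :=
  Measure.map (fun a : Fin n → A => wordCons n a (shift^[n] y))
    ((Measure.pi fun _ : Fin n => p).withDensity
      fun a => ENNReal.ofReal (Real.exp (birkhoff n f (wordCons n a (shift^[n] y)))))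


section Aux

set_option linter.unusedSectionVars false

lemma term_nonneg (x y : ℕ → A) (i : ℕ) :
    0 ≤ (1 / 2 : ℝ) ^ (i + 1) * (dist (x i) (y i) / (1 + dist (x i) (y i))) := by
  have := dist_nonneg (x := x i) (y := y i)
  positivity

lemma term_le (x y : ℕ → A) (i : ℕ) :
    (1 / 2 : ℝ) ^ (i + 1) * (dist (x i) (y i) / (1 + dist (x i) (y i)))
      ≤ (1 / 2 : ℝ) ^ (i + 1) := by
  have hd := dist_nonneg (x := x i) (y := y i)
  have h1 : dist (x i) (y i) / (1 + dist (x i) (y i)) ≤ 1 := by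
    rw [div_le_one (by linarith)]; linarith
  calc (1 / 2 : ℝ) ^ (i + 1) * (dist (x i) (y i) / (1 + dist (x i) (y i)))
      ≤ (1 / 2 : ℝ) ^ (i + 1) * 1 := by
        apply mul_le_mul_of_nonneg_left h1 (by positivity)
    _ = (1 / 2 : ℝ) ^ (i + 1) := mul_one _

lemma summable_geo_succ : Summable (fun i : ℕ => (1 / 2 : ℝ) ^ (i + 1)) := by
  have := summable_geometric_of_lt_one (r := (1/2 : ℝ)) (by norm_num) (by norm_num)
  simpa [pow_succ] using this.mul_right (1/2 : ℝ)

lemma tsum_geo_succ : ∑' i : ℕ, (1 / 2 : ℝ) ^ (i + 1) = 1 := by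
  have h : (fun i : ℕ => (1 / 2 : ℝ) ^ (i + 1)) = fun i : ℕ => (1 / 2 : ℝ) ^ i * (1/2) := by
    funext i; rw [pow_succ]
  rw [h, tsum_mul_right, tsum_geometric_of_lt_one (by norm_num) (by norm_num)]
  norm_num

lemma summable_term (x y : ℕ → A) :
    Summable
      (fun i : ℕ => (1 / 2 : ℝ) ^ (i + 1) * (dist (x i) (y i) / (1 + dist (x i) (y i)))) :=
  Summable.of_nonneg_of_le (term_nonneg x y) (term_le x y) summable_geo_succ

lemma dOmega_nonneg (x y : ℕ → A) : 0 ≤ dOmega x y :=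
  tsum_nonneg (term_nonneg x y)

lemma dOmega_le_one (x y : ℕ → A) : dOmega x y ≤ 1 := by
  calc dOmega x y ≤ ∑' i : ℕ, (1 / 2 : ℝ) ^ (i + 1) :=
        Summable.tsum_le_tsum (term_le x y) (summable_term x y) summable_geo_succ
    _ = 1 := tsum_geo_succ

lemma dOmega_le (x z : ℕ → A) (N : ℕ) :
    dOmega x z ≤ (∑ i ∈ Finset.range N, dist (x i) (z i)) + (1 / 2 : ℝ) ^ N := by
  set t : ℕ → ℝ := fun i => (1 / 2 : ℝ) ^ (i + 1) * (dist (x i) (z i) / (1 + dist (x i) (z i)))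
    with ht_def
  have ht : Summable t := summable_term x z
  have hsplit : dOmega x z = (∑ i ∈ Finset.range N, t i) + ∑' i : ℕ, t (i + N) :=
    (ht.sum_add_tsum_nat_add N).symm
  rw [hsplit]
  have h1 : ∑ i ∈ Finset.range N, t i ≤ ∑ i ∈ Finset.range N, dist (x i) (z i) := by
    apply Finset.sum_le_sum
    intro i _
    have hd := dist_nonneg (x := x i) (y := z i)
    have hq : dist (x i) (z i) / (1 + dist (x i) (z i)) ≤ dist (x i) (z i) :=
      div_le_self hd (by linarith)
    calc t i ≤ 1 * (dist (x i) (z i) / (1 + dist (x i) (z i))) := by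
          apply mul_le_mul_of_nonneg_right _ (by positivity)
          exact pow_le_one₀ (by norm_num) (by norm_num)
      _ ≤ dist (x i) (z i) := by rw [one_mul]; exact hq
  have h2 : ∑' i : ℕ, t (i + N) ≤ (1 / 2 : ℝ) ^ N := by
    have hb : ∀ i : ℕ, t (i + N) ≤ (1 / 2 : ℝ) ^ N * (1 / 2 : ℝ) ^ (i + 1) := by
      intro i
      calc t (i + N) ≤ (1 / 2 : ℝ) ^ (i + N + 1) := term_le x z (i + N)
        _ = (1 / 2 : ℝ) ^ N * (1 / 2 : ℝ) ^ (i + 1) := by ring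
    calc ∑' i : ℕ, t (i + N)
        ≤ ∑' i : ℕ, (1 / 2 : ℝ) ^ N * (1 / 2 : ℝ) ^ (i + 1) :=
          Summable.tsum_le_tsum hb ((summable_nat_add_iff N).mpr ht) (summable_geo_succ.mul_left _)
      _ = (1 / 2 : ℝ) ^ N * ∑' i : ℕ, (1 / 2 : ℝ) ^ (i + 1) := tsum_mul_left
      _ = (1 / 2 : ℝ) ^ N := by rw [tsum_geo_succ, mul_one]
  linarith

lemma tendsto_dOmega (x : ℕ → A) :
    Filter.Tendsto (fun z => dOmega x z) (nhds x) (nhds 0) := by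
  rw [Metric.tendsto_nhds]
  intro ε hε
  obtain ⟨N, hN⟩ : ∃ N : ℕ, (1 / 2 : ℝ) ^ N < ε / 2 :=
    exists_pow_lt_of_lt_one (by linarith) (by norm_num)
  have hsum : Filter.Tendsto (fun z : ℕ → A => ∑ i ∈ Finset.range N, dist (x i) (z i))
      (nhds x) (nhds 0) := by
    have h0 : ∀ i ∈ Finset.range N,
        Filter.Tendsto (fun z : ℕ → A => dist (x i) (z i)) (nhds x) (nhds 0) := by
      intro i _
      have hc : Continuous fun z : ℕ → A => dist (x i) (z i) :=
        continuous_const.dist (continuous_apply i)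
      simpa using hc.tendsto x
    simpa using tendsto_finset_sum (Finset.range N) h0
  filter_upwards [hsum.eventually (gt_mem_nhds (by linarith : (0:ℝ) < ε / 2))] with z hz
  have hle := dOmega_le x z N
  have h0 := dOmega_nonneg x z
  rw [Real.dist_eq, sub_zero, abs_of_nonneg h0]
  linarith

lemma IsHolder.continuous {α : ℝ} (hα : 0 < α) {f : (ℕ → A) → ℝ} (hf : IsHolder α f) :
    Continuous f := by
  obtain ⟨C, hC0, hC⟩ := hf
  rw [continuous_iff_continuousAt]
  intro x
  rw [ContinuousAt, tendsto_iff_dist_tendsto_zero]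
  have hbnd : Filter.Tendsto (fun z => C * dOmega x z ^ α) (nhds x) (nhds 0) := by
    have h2 : Filter.Tendsto (fun z => dOmega x z ^ α) (nhds x) (nhds 0) := by
      have h3 := (Real.continuousAt_rpow_const 0 α (Or.inr hα.le)).tendsto.comp
        (tendsto_dOmega x)
      simpa [Function.comp_def, Real.zero_rpow hα.ne'] using h3
    simpa using h2.const_mul C
  apply squeeze_zero (fun z => dist_nonneg) (fun z => ?_) hbnd
  rw [Real.dist_eq, abs_sub_comm]
  exact hC x z

lemma measurable_proj (n : ℕ) : Measurable (proj n : (ℕ → A) → Fin n → A) :=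
  measurable_pi_lambda _ fun i => measurable_pi_apply _

lemma continuous_shift : Continuous (shift : (ℕ → A) → ℕ → A) :=
  continuous_pi fun i => continuous_apply (i + 1)

lemma shift_iterate (k : ℕ) (y : ℕ → A) (i : ℕ) : shift^[k] y i = y (i + k) := by
  induction k generalizing y with
  | zero => rfl
  | succ k ih =>
    rw [Function.iterate_succ_apply, ih]
    rfl

lemma measurable_wordCons (n : ℕ) (z : ℕ → A) :
    Measurable fun a : Fin n → A => wordCons n a z := by
  apply measurable_pi_lambda
  intro i
  show Measurable fun a : Fin n → A => if h : i < n then a ⟨i, h⟩ else z (i - n)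
  by_cases h : i < n
  · simp only [dif_pos h]
    exact measurable_pi_apply _
  · simp only [dif_neg h]
    exact measurable_const

end Aux

/-- Let `f̄` be an `α`-Hölder normalized potential and
`γ_n(·|y) = L_{f̄}^n(1_·)(σ^n y)`. If `μ` is a shift-invariant Borel probability measure
whose restriction to `F_{Λ_n}` is absolutely continuous w.r.t. that of `pᴺ`, then for all
`y` and `n ≥ 1`,
`H_{Λ_n}(μ | γ_n(·|y)) = -H_{Λ_n}(μ) - ∫ S_n(f̄)(x_{Λ_n} y_{Λ_n^c}) dμ(x)`. -/
theorem statement9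
    (p : Measure A) [IsProbabilityMeasure p]
    (hsupp : ∀ U : Set A, IsOpen U → U.Nonempty → 0 < p U)
    (α : ℝ) (hα0 : 0 < α) (hα1 : α < 1)
    (f : (ℕ → A) → ℝ) (hf : IsHolder α f)
    (hnorm : ∀ x, ruelle p f (fun _ => 1) x = 1)
    (μ : Measure (ℕ → A)) [IsProbabilityMeasure μ]
    (hinv : μ.map shift = μ)
    (hac : ∀ m : ℕ, μ.map (proj m) ≪ Measure.pi fun _ : Fin m => p)
    (y : ℕ → A) (n : ℕ) (hn : 1 ≤ n) :
    relEntN n μ (gammaMeasure p f n y)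
      = relEnt (μ.map (proj n)) (Measure.pi fun _ : Fin n => p)
        - ((∫ x, birkhoff n f (concatAt n x y) ∂μ : ℝ) : EReal) := by
  classical
  have hfc : Continuous f := IsHolder.continuous hα0 hf
  obtain ⟨C, hC0, hC⟩ := hf
  set ν : Measure (Fin n → A) := Measure.pi fun _ : Fin n => p with hν_def
  set z : ℕ → A := shift^[n] y with hz_def
  set W : (Fin n → A) → ℕ → A := fun a => wordCons n a z with hW_def
  set g : (Fin n → A) → ℝ := fun a => birkhoff n f (W a) with hg_def
  set G : (Fin n → A) → ℝ≥0∞ := fun a => ENNReal.ofReal (Real.exp (g a)) with hG_def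
  have hb_cont : Continuous (birkhoff n f) := by
    unfold birkhoff
    exact continuous_finset_sum _ fun i _ => hfc.comp (continuous_shift.iterate i)
  have hWm : Measurable W := measurable_wordCons n z
  have hgm : Measurable g := hb_cont.measurable.comp hWm
  have hGm : Measurable G :=
    ENNReal.measurable_ofReal.comp (Real.measurable_exp.comp hgm)
  have hprojm : Measurable (proj n : (ℕ → A) → Fin n → A) := measurable_proj n
  have hcomp : (proj n : (ℕ → A) → Fin n → A) ∘ W = id := by
    funext a
    funext i
    simp [proj, hW_def, wordCons, i.isLt]
  have hmap : (gammaMeasure p f n y).map (proj n) = ν.withDensity G := by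
    show (Measure.map W (ν.withDensity G)).map (proj n) = ν.withDensity G
    rw [Measure.map_map hprojm hWm, hcomp, Measure.map_id]
  set μn : Measure (Fin n → A) := μ.map (proj n) with hμn_def
  have hμnP : IsProbabilityMeasure μn := Measure.isProbabilityMeasure_map hprojm.aemeasurable
  have hμν : μn ≪ ν := hac n
  have hG0 : ∀ᵐ a ∂ν, G a ≠ 0 := ae_of_all _ fun a => by
    simp [hG_def, Real.exp_pos]
  have hGtop : ∀ᵐ a ∂ν, G a ≠ ∞ := ae_of_all _ fun a => ENNReal.ofReal_ne_top
  have hνG : ν ≪ ν.withDensity G := withDensity_absolutelyContinuous' hGm.aemeasurable hG0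
  have hμγ : μn ≪ ν.withDensity G := hμν.trans hνG
  have hrn : μn.rnDeriv (ν.withDensity G) =ᵐ[ν] fun a => (G a)⁻¹ * μn.rnDeriv ν a :=
    Measure.rnDeriv_withDensity_right μn ν hGm.aemeasurable hG0 hGtop
  have t1 : SigmaFinite ν := inferInstance
  have t2 : SigmaFinite μn := inferInstance
  have hpos : ∀ᵐ a ∂μn, 0 < μn.rnDeriv ν a := Measure.rnDeriv_pos (μ := μn) (ν := ν) hμν
  have hlt : ∀ᵐ a ∂μn, μn.rnDeriv ν a < ∞ := hμν.ae_le (Measure.rnDeriv_lt_top μn ν)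
  have hkey : (fun a => Real.log (μn.rnDeriv (ν.withDensity G) a).toReal)
      =ᵐ[μn] fun a => Real.log (μn.rnDeriv ν a).toReal - g a := by
    filter_upwards [hμν.ae_le hrn, hpos, hlt] with a h1 h2 h3
    rw [h1]
    have hD0 : (μn.rnDeriv ν a).toReal ≠ 0 := (ENNReal.toReal_pos h2.ne' h3.ne).ne'
    have hGa : G a = ENNReal.ofReal (Real.exp (g a)) := rfl
    rw [ENNReal.toReal_mul, ENNReal.toReal_inv, hGa,
      ENNReal.toReal_ofReal (Real.exp_nonneg _),
      Real.log_mul (by positivity) hD0, Real.log_inv, Real.log_exp]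
    ring
  -- boundedness of g
  have hMbd : ∀ x, |f x| ≤ |f y| + C := by
    intro x
    have h1 := hC x y
    have h2 : dOmega x y ^ α ≤ 1 :=
      Real.rpow_le_one (dOmega_nonneg x y) (dOmega_le_one x y) hα0.le
    have h3 : C * dOmega x y ^ α ≤ C := mul_le_of_le_one_right hC0 h2
    calc |f x| = |(f x - f y) + f y| := by ring_nf
      _ ≤ |f x - f y| + |f y| := abs_add_le _ _
      _ ≤ C + |f y| := by linarith
      _ = |f y| + C := by ring
  have hgb : ∀ a, |g a| ≤ (n : ℝ) * (|f y| + C) := by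
    intro a
    calc |g a| ≤ ∑ i ∈ Finset.range n, |f (shift^[i] (W a))| := by
          rw [hg_def]
          exact Finset.abs_sum_le_sum_abs _ _
      _ ≤ ∑ i ∈ Finset.range n, (|f y| + C) :=
          Finset.sum_le_sum fun i _ => hMbd _
      _ = (n : ℝ) * (|f y| + C) := by
          rw [Finset.sum_const, Finset.card_range, nsmul_eq_mul]
  have hg_int : Integrable g μn :=
    (integrable_const ((n : ℝ) * (|f y| + C))).mono' hgm.aestronglyMeasurable
      (ae_of_all _ fun a => by simpa [Real.norm_eq_abs] using hgb a)
  -- the integral identity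
  have hWp : ∀ x : ℕ → A, W (proj n x) = concatAt n x y := by
    intro x
    funext i
    show (if h : i < n then proj n x ⟨i, h⟩ else z (i - n)) = concatAt n x y i
    by_cases h : i < n
    · simp [h, proj, concatAt]
    · rw [dif_neg h]
      have : z (i - n) = y (i - n + n) := shift_iterate n y (i - n)
      rw [this, Nat.sub_add_cancel (Nat.le_of_not_lt h)]
      simp [concatAt, h]
  have hInt : ∫ a, g a ∂μn = ∫ x, birkhoff n f (concatAt n x y) ∂μ := by
    rw [hμn_def, integral_map hprojm.aemeasurable hgm.aestronglyMeasurable]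
    refine integral_congr_ae (ae_of_all _ fun x => ?_)
    rw [hg_def]
    show birkhoff n f (W (proj n x)) = birkhoff n f (concatAt n x y)
    rw [hWp]
  rw [relEntN, hmap, ← hInt]
  by_cases hI : Integrable (fun a => Real.log (μn.rnDeriv ν a).toReal) μn
  · have hI2 : Integrable (fun a => Real.log (μn.rnDeriv (ν.withDensity G) a).toReal) μn :=
      (hI.sub hg_int).congr hkey.symm
    rw [relEnt, relEnt, if_pos ⟨hμγ, hI2⟩, if_pos ⟨hμν, hI⟩]
    have hval : ∫ a, Real.log (μn.rnDeriv (ν.withDensity G) a).toReal ∂μn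
        = ∫ a, Real.log (μn.rnDeriv ν a).toReal ∂μn - ∫ a, g a ∂μn := by
      rw [integral_congr_ae hkey, integral_sub hI hg_int]
    rw [hval, EReal.coe_sub]
  · have hI2 : ¬ Integrable (fun a => Real.log (μn.rnDeriv (ν.withDensity G) a).toReal) μn := by
      intro h
      apply hI
      have h2 := (h.congr hkey).add hg_int
      exact h2.congr (ae_of_all _ fun a => by simp)
    rw [relEnt, relEnt, if_neg fun h => hI2 h.2, if_neg fun h => hI h.2,
      EReal.top_sub_coe]


end Paper
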